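/- arXiv:2306.01726 — 4 statements merged into one kernel-verified Lean document; each statement's English description precedes it below -/
import Mathlib

section
/- If three binary classifiers have all pair and triple correlations zero on both labels, then each decision-event frequency satisfies the independent generating polynomial; for example f_{α,β,α} = P_α·P_{1,α}(1−P_{2,α})P_{3,α} + (1−P_α)(1−P_{1,β})P_{2,β}(1−P_{3,β}). -/
open Finset

noncomputable section

/-- number of items with true label `l` -/
def nLabel {S : Type} [Fintype S] (truelabel : S → Bool) (l : Bool) : ℕ :=
  (univ.filter fun s => truelabel s = l).card

/-- prevalence P_α of label α (= `true`) -/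
def prevAlpha {S : Type} [Fintype S] (truelabel : S → Bool) : ℝ :=
  (nLabel truelabel true : ℝ) / (Fintype.card S : ℝ)

/-- label accuracy P_{i,ℓ} of classifier `d` on items of true label `l` -/
def acc {S : Type} [Fintype S] (truelabel d : S → Bool) (l : Bool) : ℝ :=
  ((univ.filter fun s => truelabel s = l ∧ d s = l).card : ℝ) / (nLabel truelabel l : ℝ)

/-- correctness indicator 𝟙_i(s) of classifier `d` on item `s` -/
def ind {S : Type} (truelabel d : S → Bool) (s : S) : ℝ :=
  if d s = truelabel s then 1 else 0

/-- pair decision correlation Γ_{i,j,ℓ} -/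
def pairCorr {S : Type} [Fintype S] (truelabel di dj : S → Bool) (l : Bool) : ℝ :=
  (1 / (nLabel truelabel l : ℝ)) *
    ∑ s ∈ univ.filter (fun s => truelabel s = l),
      (ind truelabel di s - acc truelabel di l) * (ind truelabel dj s - acc truelabel dj l)

/-- 3-way decision correlation Γ_{i,j,k,ℓ} -/
def tripleCorr {S : Type} [Fintype S] (truelabel di dj dk : S → Bool) (l : Bool) : ℝ :=
  (1 / (nLabel truelabel l : ℝ)) *
    ∑ s ∈ univ.filter (fun s => truelabel s = l),
      (ind truelabel di s - acc truelabel di l) * (ind truelabel dj s - acc truelabel dj l) *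
        (ind truelabel dk s - acc truelabel dk l)

/-- decision-event frequency f_{ℓ₁,ℓ₂,ℓ₃} -/
def freq3 {S : Type} [Fintype S] (d₁ d₂ d₃ : S → Bool) (l₁ l₂ l₃ : Bool) : ℝ :=
  ((univ.filter fun s => d₁ s = l₁ ∧ d₂ s = l₂ ∧ d₃ s = l₃).card : ℝ) / (Fintype.card S : ℝ)

/-- marginal vote frequency f_{i,ℓ} -/
def freq1 {S : Type} [Fintype S] (d : S → Bool) (l : Bool) : ℝ :=
  ((univ.filter fun s => d s = l).card : ℝ) / (Fintype.card S : ℝ)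

/-- pair vote frequency f_{i,j,ℓ} -/
def freq2 {S : Type} [Fintype S] (di dj : S → Bool) (l : Bool) : ℝ :=
  ((univ.filter fun s => di s = l ∧ dj s = l).card : ℝ) / (Fintype.card S : ℝ)

end

-- auxiliary

lemma expand_sum {S : Type} (A : Finset S) (e₁ e₂ e₃ : S → ℝ) (m₁ m₂ m₃ σ₁ σ₂ σ₃ : ℝ)
    (h1 : ∑ s ∈ A, e₁ s = 0) (h2 : ∑ s ∈ A, e₂ s = 0) (h3 : ∑ s ∈ A, e₃ s = 0)
    (h12 : ∑ s ∈ A, e₁ s * e₂ s = 0) (h13 : ∑ s ∈ A, e₁ s * e₃ s = 0)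
    (h23 : ∑ s ∈ A, e₂ s * e₃ s = 0)
    (h123 : ∑ s ∈ A, e₁ s * e₂ s * e₃ s = 0) :
    ∑ s ∈ A, (m₁ + σ₁ * e₁ s) * (m₂ + σ₂ * e₂ s) * (m₃ + σ₃ * e₃ s)
      = A.card * (m₁ * m₂ * m₃) := by
  have key : ∀ s, (m₁ + σ₁ * e₁ s) * (m₂ + σ₂ * e₂ s) * (m₃ + σ₃ * e₃ s)
      = m₁*m₂*m₃ + (m₂*m₃*σ₁) * e₁ s + (m₁*m₃*σ₂) * e₂ s + (m₁*m₂*σ₃) * e₃ s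
        + (m₃*σ₁*σ₂) * (e₁ s * e₂ s) + (m₂*σ₁*σ₃) * (e₁ s * e₃ s)
        + (m₁*σ₂*σ₃) * (e₂ s * e₃ s) + (σ₁*σ₂*σ₃) * (e₁ s * e₂ s * e₃ s) := fun s => by ring
  simp only [key, Finset.sum_add_distrib, ← Finset.mul_sum, h1, h2, h3, h12, h13, h23, h123,
    mul_zero, add_zero, Finset.sum_const, nsmul_eq_mul]
  ring

/-- generating factor -/
noncomputable def gfac {S : Type} [Fintype S] (t d : S → Bool) (l b : Bool) : ℝ :=
  if b = l then acc t d l else 1 - acc t d l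

lemma label_count {S : Type} [Fintype S] (t d₁ d₂ d₃ : S → Bool) (l b₁ b₂ b₃ : Bool)
    (hne : ∃ s, t s = l)
    (h12 : pairCorr t d₁ d₂ l = 0) (h13 : pairCorr t d₁ d₃ l = 0)
    (h23 : pairCorr t d₂ d₃ l = 0) (h123 : tripleCorr t d₁ d₂ d₃ l = 0) :
    ((univ.filter fun s => t s = l ∧ d₁ s = b₁ ∧ d₂ s = b₂ ∧ d₃ s = b₃).card : ℝ)
      = (nLabel t l : ℝ) * (gfac t d₁ l b₁ * (gfac t d₂ l b₂ * gfac t d₃ l b₃)) := by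
  classical
  set A : Finset S := univ.filter fun s => t s = l with hA
  have hmem : ∀ s ∈ A, t s = l := fun s hs => (mem_filter.mp hs).2
  have hcard : (nLabel t l : ℝ) = (A.card : ℝ) := rfl
  have hnpos : (0:ℝ) < (nLabel t l : ℝ) := by
    obtain ⟨s, hs⟩ := hne
    exact_mod_cast Nat.cast_pos.mpr (Finset.card_pos.mpr ⟨s, mem_filter.mpr ⟨mem_univ s, hs⟩⟩)
  have hnne : (nLabel t l : ℝ) ≠ 0 := ne_of_gt hnpos
  -- sum of indicators
  have hsum : ∀ d : S → Bool, ∑ s ∈ A, ind t d s = (nLabel t l : ℝ) * acc t d l := by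
    intro d
    have h1 : ∑ s ∈ A, ind t d s = ((A.filter fun s => d s = t s).card : ℝ) := by
      unfold ind
      rw [Finset.sum_boole]
    have h2 : (A.filter fun s => d s = t s) = univ.filter fun s => t s = l ∧ d s = l := by
      ext s
      simp only [hA, Finset.mem_filter, Finset.mem_univ, true_and]
      constructor
      · rintro ⟨ht, hd⟩; exact ⟨ht, ht ▸ hd⟩
      · rintro ⟨ht, hd⟩; exact ⟨ht, ht ▸ hd⟩
    rw [h1, h2]
    unfold acc
    field_simp
  have hcent : ∀ d : S → Bool, ∑ s ∈ A, (ind t d s - acc t d l) = 0 := by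
    intro d
    rw [Finset.sum_sub_distrib, hsum, Finset.sum_const, nsmul_eq_mul, ← hcard]
    ring
  -- pair/triple sums
  have hp12 : ∑ s ∈ A, (ind t d₁ s - acc t d₁ l) * (ind t d₂ s - acc t d₂ l) = 0 := by
    have := h12; unfold pairCorr at this
    rcases mul_eq_zero.mp this with h | h
    · exact absurd h (by simp [hnne])
    · exact h
  have hp13 : ∑ s ∈ A, (ind t d₁ s - acc t d₁ l) * (ind t d₃ s - acc t d₃ l) = 0 := by
    have := h13; unfold pairCorr at this
    rcases mul_eq_zero.mp this with h | h
    · exact absurd h (by simp [hnne])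
    · exact h
  have hp23 : ∑ s ∈ A, (ind t d₂ s - acc t d₂ l) * (ind t d₃ s - acc t d₃ l) = 0 := by
    have := h23; unfold pairCorr at this
    rcases mul_eq_zero.mp this with h | h
    · exact absurd h (by simp [hnne])
    · exact h
  have hp123 : ∑ s ∈ A, (ind t d₁ s - acc t d₁ l) * (ind t d₂ s - acc t d₂ l) *
      (ind t d₃ s - acc t d₃ l) = 0 := by
    have := h123; unfold tripleCorr at this
    rcases mul_eq_zero.mp this with h | h
    · exact absurd h (by simp [hnne])
    · exact h
  -- factor pointwise
  have hfact : ∀ (d : S → Bool) (b : Bool), ∀ s ∈ A,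
      (if d s = b then (1:ℝ) else 0)
        = gfac t d l b + (if b = l then (1:ℝ) else -1) * (ind t d s - acc t d l) := by
    intro d b s hs
    have ht : t s = l := hmem s hs
    simp only [gfac, ind, ht]
    rcases Bool.eq_false_or_eq_true b with hb | hb <;>
      rcases Bool.eq_false_or_eq_true l with hl | hl <;>
        rcases Bool.eq_false_or_eq_true (d s) with hd | hd <;>
          (subst hb; subst hl; simp [hd]; try ring)
  -- count as sum of products
  have hcount : ((univ.filter fun s => t s = l ∧ d₁ s = b₁ ∧ d₂ s = b₂ ∧ d₃ s = b₃).card : ℝ)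
      = ∑ s ∈ A, (if d₁ s = b₁ then (1:ℝ) else 0) * ((if d₂ s = b₂ then (1:ℝ) else 0) *
          (if d₃ s = b₃ then (1:ℝ) else 0)) := by
    have heq : (univ.filter fun s => t s = l ∧ d₁ s = b₁ ∧ d₂ s = b₂ ∧ d₃ s = b₃)
        = A.filter fun s => d₁ s = b₁ ∧ d₂ s = b₂ ∧ d₃ s = b₃ := by
      ext s; simp [hA, and_assoc]
    rw [heq, ← Finset.sum_boole]
    refine Finset.sum_congr rfl fun s _ => ?_
    by_cases h1 : d₁ s = b₁ <;> by_cases h2 : d₂ s = b₂ <;> by_cases h3 : d₃ s = b₃ <;>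
      simp [h1, h2, h3]
  rw [hcount, Finset.sum_congr rfl (fun s hs => by
    rw [hfact d₁ b₁ s hs, hfact d₂ b₂ s hs, hfact d₃ b₃ s hs, ← mul_assoc]),
    expand_sum A _ _ _ _ _ _ _ _ _ (hcent d₁) (hcent d₂) (hcent d₃) hp12 hp13 hp23 hp123,
    ← hcard]
  ring


/-- Theorem 1 instance (independent generating polynomial for the pattern (α,β,α)):
if all pair and triple correlations vanish on both labels, then
f_{α,β,α} = P_α·P_{1,α}(1−P_{2,α})P_{3,α} + (1−P_α)(1−P_{1,β})P_{2,β}(1−P_{3,β}). -/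
theorem independent_freq_alpha_beta_alpha
    (S : Type) [Fintype S] (truelabel d₁ d₂ d₃ : S → Bool)
    (hα : ∃ s, truelabel s = true) (hβ : ∃ s, truelabel s = false)
    (h12 : ∀ l, pairCorr truelabel d₁ d₂ l = 0)
    (h13 : ∀ l, pairCorr truelabel d₁ d₃ l = 0)
    (h23 : ∀ l, pairCorr truelabel d₂ d₃ l = 0)
    (h123 : ∀ l, tripleCorr truelabel d₁ d₂ d₃ l = 0) :
    freq3 d₁ d₂ d₃ true false true =
      prevAlpha truelabel * acc truelabel d₁ true * (1 - acc truelabel d₂ true) *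
          acc truelabel d₃ true +
        (1 - prevAlpha truelabel) * (1 - acc truelabel d₁ false) * acc truelabel d₂ false *
          (1 - acc truelabel d₃ false) := by
  classical
  set t := truelabel
  have hT := label_count t d₁ d₂ d₃ true true false true hα (h12 true) (h13 true) (h23 true)
    (h123 true)
  have hF := label_count t d₁ d₂ d₃ false true false true hβ (h12 false) (h13 false) (h23 false)
    (h123 false)
  -- split count by label
  have hsplit : ((univ.filter fun s => d₁ s = true ∧ d₂ s = false ∧ d₃ s = true).card : ℝ)
      = ((univ.filter fun s => t s = true ∧ d₁ s = true ∧ d₂ s = false ∧ d₃ s = true).card : ℝ)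
        + ((univ.filter fun s => t s = false ∧ d₁ s = true ∧ d₂ s = false ∧ d₃ s = true).card : ℝ) := by
    have h := Finset.card_filter_add_card_filter_not
      (s := univ.filter fun s => d₁ s = true ∧ d₂ s = false ∧ d₃ s = true)
      (p := fun s => t s = true)
    have e1 : ((univ.filter fun s => d₁ s = true ∧ d₂ s = false ∧ d₃ s = true).filter
        fun s => t s = true) = univ.filter fun s => t s = true ∧ d₁ s = true ∧ d₂ s = false ∧ d₃ s = true := by
      ext s; simp; tauto
    have e2 : ((univ.filter fun s => d₁ s = true ∧ d₂ s = false ∧ d₃ s = true).filter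
        fun s => ¬ t s = true) = univ.filter fun s => t s = false ∧ d₁ s = true ∧ d₂ s = false ∧ d₃ s = true := by
      ext s; simp; tauto
    rw [e1, e2] at h
    exact_mod_cast h.symm
  have hNsplit : (nLabel t true : ℝ) + (nLabel t false : ℝ) = (Fintype.card S : ℝ) := by
    have h := Finset.card_filter_add_card_filter_not
      (s := (univ : Finset S)) (p := fun s => t s = true)
    have e2 : ((univ : Finset S).filter fun s => ¬ t s = true)
        = univ.filter fun s => t s = false := by ext s; simp
    rw [e2] at h
    unfold nLabel
    rw [Finset.card_univ] at h
    exact_mod_cast h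
  have hNpos : (0:ℝ) < (Fintype.card S : ℝ) := by
    obtain ⟨s, _⟩ := hα
    exact_mod_cast Fintype.card_pos_iff.mpr ⟨s⟩
  have hNne : (Fintype.card S : ℝ) ≠ 0 := ne_of_gt hNpos
  have hprev : prevAlpha t = (nLabel t true : ℝ) / (Fintype.card S : ℝ) := rfl
  have hprev' : 1 - prevAlpha t = (nLabel t false : ℝ) / (Fintype.card S : ℝ) := by
    rw [hprev, eq_div_iff hNne, sub_mul, div_mul_cancel₀ _ hNne, ← hNsplit]; ring
  unfold freq3
  rw [hsplit, hT, hF]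
  have g1 : ∀ d : S → Bool, gfac t d true true = acc t d true := fun d => by simp [gfac]
  have g2 : ∀ d : S → Bool, gfac t d true false = 1 - acc t d true := fun d => by simp [gfac]
  have g3 : ∀ d : S → Bool, gfac t d false true = 1 - acc t d false := fun d => by simp [gfac]
  have g4 : ∀ d : S → Bool, gfac t d false false = acc t d false := fun d => by simp [gfac]
  rw [g1, g2, g1, g3, g4, g3, hprev', hprev]
  field_simp
end

section
/- For two arbitrarily correlated binary classifiers, the agreement rate satisfies a_{i,j} = P_α(P_{i,α}P_{j,α} + (1−P_{i,α})(1−P_{j,α}) + 2Γ_{i,j,α}) + (1−P_α)(P_{i,β}P_{j,β} + (1−P_{i,β})(1−P_{j,β}) + 2Γ_{i,j,β}). -/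
open Finset

private lemma key_label {S : Type} [Fintype S] (tl di dj : S → Bool) (l : Bool)
    (hn : (nLabel tl l : ℝ) ≠ 0) :
    (nLabel tl l : ℝ) *
        (acc tl di l * acc tl dj l + (1 - acc tl di l) * (1 - acc tl dj l) +
          2 * pairCorr tl di dj l) =
      ((univ.filter fun s => tl s = l ∧ di s = dj s).card : ℝ) := by
  classical
  set F := univ.filter (fun s => tl s = l) with hF
  have hcard : (F.card : ℝ) = (nLabel tl l : ℝ) := by simp [nLabel, hF]
  have hsum : ∀ d : S → Bool, (∑ s ∈ F, ind tl d s)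
      = ((univ.filter fun s => tl s = l ∧ d s = l).card : ℝ) := by
    intro d
    have h1 : ∀ s ∈ F, ind tl d s = if d s = l then (1:ℝ) else 0 := by
      intro s hs
      simp only [hF, mem_filter] at hs
      simp [ind, hs.2]
    rw [Finset.sum_congr rfl h1, Finset.sum_boole]
    congr 1
    rw [hF, Finset.filter_filter]
  have hpt : ∀ s : S, ind tl di s * ind tl dj s +
      (1 - ind tl di s) * (1 - ind tl dj s) = if di s = dj s then (1:ℝ) else 0 := by
    intro s
    cases hdi : di s <;> cases hdj : dj s <;> cases htl : tl s <;>
      simp [ind, hdi, hdj, htl]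
  have hsum2 : (∑ s ∈ F, (ind tl di s * ind tl dj s +
      (1 - ind tl di s) * (1 - ind tl dj s)))
      = ((univ.filter fun s => tl s = l ∧ di s = dj s).card : ℝ) := by
    rw [Finset.sum_congr rfl (fun s _ => hpt s), Finset.sum_boole]
    congr 1
    rw [hF, Finset.filter_filter]
  set SA := ∑ s ∈ F, ind tl di s with hSA
  set SB := ∑ s ∈ F, ind tl dj s with hSB
  set T := ∑ s ∈ F, ind tl di s * ind tl dj s with hT
  have haccA : acc tl di l = SA / (nLabel tl l : ℝ) := by
    rw [hSA, hsum di]; rfl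
  have haccB : acc tl dj l = SB / (nLabel tl l : ℝ) := by
    rw [hSB, hsum dj]; rfl
  have hC : 2 * T + (nLabel tl l : ℝ) - SA - SB
      = ((univ.filter fun s => tl s = l ∧ di s = dj s).card : ℝ) := by
    rw [← hsum2]
    have : ∀ s ∈ F, ind tl di s * ind tl dj s + (1 - ind tl di s) * (1 - ind tl dj s)
        = 2 * (ind tl di s * ind tl dj s) + 1 - ind tl di s - ind tl dj s := by
      intro s _; ring
    rw [Finset.sum_congr rfl this]
    simp only [Finset.sum_sub_distrib, Finset.sum_add_distrib, ← Finset.mul_sum,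
      Finset.sum_const, nsmul_eq_mul, mul_one]
    rw [hcard]
  have hpc : pairCorr tl di dj l = (1 / (nLabel tl l : ℝ)) *
      (T - acc tl dj l * SA - acc tl di l * SB + (nLabel tl l : ℝ) * (acc tl di l * acc tl dj l)) := by
    rw [pairCorr]
    congr 1
    have : ∀ s ∈ F, (ind tl di s - acc tl di l) * (ind tl dj s - acc tl dj l)
        = ind tl di s * ind tl dj s - acc tl dj l * ind tl di s
          - acc tl di l * ind tl dj s + acc tl di l * acc tl dj l := by
      intro s _; ring
    rw [show (univ.filter fun s => tl s = l) = F from rfl, Finset.sum_congr rfl this]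
    simp only [Finset.sum_sub_distrib, Finset.sum_add_distrib, ← Finset.mul_sum,
      Finset.sum_const, nsmul_eq_mul]
    rw [hcard]
    ring
  rw [← hC, hpc, haccA, haccB]
  field_simp
  ring

/-- Agreement rate of two arbitrarily correlated binary classifiers:
a_{i,j} = P_α(P_{i,α}P_{j,α} + (1−P_{i,α})(1−P_{j,α}) + 2Γ_{i,j,α})
        + (1−P_α)(P_{i,β}P_{j,β} + (1−P_{i,β})(1−P_{j,β}) + 2Γ_{i,j,β}). -/
theorem agreement_rate_formula
    (S : Type) [Fintype S] (truelabel di dj : S → Bool)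
    (hα : ∃ s, truelabel s = true) (hβ : ∃ s, truelabel s = false) :
    ((univ.filter fun s => di s = dj s).card : ℝ) / (Fintype.card S : ℝ) =
      prevAlpha truelabel *
          (acc truelabel di true * acc truelabel dj true +
            (1 - acc truelabel di true) * (1 - acc truelabel dj true) +
            2 * pairCorr truelabel di dj true) +
        (1 - prevAlpha truelabel) *
          (acc truelabel di false * acc truelabel dj false +
            (1 - acc truelabel di false) * (1 - acc truelabel dj false) +
            2 * pairCorr truelabel di dj false) := by
  classical
  obtain ⟨sα, hsα⟩ := hα
  obtain ⟨sβ, hsβ⟩ := hβ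
  have hnα : (nLabel truelabel true : ℝ) ≠ 0 := by
    have : 0 < nLabel truelabel true :=
      Finset.card_pos.2 ⟨sα, by simp [hsα]⟩
    exact_mod_cast this.ne'
  have hnβ : (nLabel truelabel false : ℝ) ≠ 0 := by
    have : 0 < nLabel truelabel false :=
      Finset.card_pos.2 ⟨sβ, by simp [hsβ]⟩
    exact_mod_cast this.ne'
  have hsplit : (nLabel truelabel true : ℝ) + (nLabel truelabel false : ℝ)
      = (Fintype.card S : ℝ) := by
    have := Finset.card_filter_add_card_filter_not
      (s := (univ : Finset S)) (p := fun s => truelabel s = true)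
    simp only [Bool.not_eq_true] at this
    have h2 : nLabel truelabel true + nLabel truelabel false = Fintype.card S := by
      simpa [nLabel, Finset.card_univ] using this
    exact_mod_cast h2
  have hN : (Fintype.card S : ℝ) ≠ 0 := by
    rw [← hsplit]
    positivity
  have hagree : ((univ.filter fun s => di s = dj s).card : ℝ)
      = ((univ.filter fun s => truelabel s = true ∧ di s = dj s).card : ℝ)
        + ((univ.filter fun s => truelabel s = false ∧ di s = dj s).card : ℝ) := by
    have := Finset.card_filter_add_card_filter_not
      (s := univ.filter fun s => di s = dj s) (p := fun s => truelabel s = true)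
    simp only [Bool.not_eq_true, Finset.filter_filter] at this
    have h2 : (univ.filter fun s => truelabel s = true ∧ di s = dj s).card
        + (univ.filter fun s => truelabel s = false ∧ di s = dj s).card
        = (univ.filter fun s => di s = dj s).card := by
      rw [← this]
      congr 1 <;> · congr 1; ext s; simp [and_comm]
    exact_mod_cast h2.symm
  have hprev : prevAlpha truelabel = (nLabel truelabel true : ℝ) / (Fintype.card S : ℝ) := rfl
  have hprev' : 1 - prevAlpha truelabel
      = (nLabel truelabel false : ℝ) / (Fintype.card S : ℝ) := by
    rw [hprev, eq_div_iff hN, sub_mul, one_mul, div_mul_cancel₀ _ hN, ← hsplit]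
    ring
  rw [hprev', hprev, hagree, ← key_label truelabel di dj true hnα,
    ← key_label truelabel di dj false hnβ]
  field_simp
end

section
/- The map (P_α, P_{i,α}, P_{i,β}) ↦ (1−P_α, 1−P_{i,β}, 1−P_{i,α}) (applied to the prevalence and each classifier's two label accuracies) is an involution that preserves all eight independent-model decision event frequencies of three classifiers. -/
noncomputable section

/-- Independent-model decision-event frequency for a voting pattern `l : Fin 3 → Bool`
(`true` = α, `false` = β), given prevalence `pα` and label accuracies `pa i`, `pb i`. -/
def indepFreq (pα : ℝ) (pa pb : Fin 3 → ℝ) (l : Fin 3 → Bool) : ℝ :=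
  pα * ∏ i, (if l i = true then pa i else 1 - pa i) +
    (1 - pα) * ∏ i, (if l i = true then 1 - pb i else pb i)

/-- The label-swap map (P_α, P_{i,α}, P_{i,β}) ↦ (1−P_α, 1−P_{i,β}, 1−P_{i,α}). -/
def labelSwap (x : ℝ × (Fin 3 → ℝ) × (Fin 3 → ℝ)) : ℝ × (Fin 3 → ℝ) × (Fin 3 → ℝ) :=
  (1 - x.1, fun i => 1 - x.2.2 i, fun i => 1 - x.2.1 i)

end

/-- The label-swap map is an involution and preserves all eight independent-model
decision-event frequencies. -/
theorem labelSwap_involution_and_invariance :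
    (∀ x : ℝ × (Fin 3 → ℝ) × (Fin 3 → ℝ), labelSwap (labelSwap x) = x) ∧
    (∀ (pα : ℝ) (pa pb : Fin 3 → ℝ) (l : Fin 3 → Bool),
      indepFreq (labelSwap (pα, pa, pb)).1 (labelSwap (pα, pa, pb)).2.1
          (labelSwap (pα, pa, pb)).2.2 l = indepFreq pα pa pb l) := by
  constructor
  · intro x
    simp [labelSwap]
  · intro pα pa pb l
    simp only [indepFreq, labelSwap]
    have h1 : ∀ i : Fin 3, (if l i = true then 1 - pb i else 1 - (1 - pb i))
        = (if l i = true then 1 - pb i else pb i) := by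
      intro i; split <;> ring
    have h2 : ∀ i : Fin 3, (if l i = true then 1 - (1 - pa i) else 1 - pa i)
        = (if l i = true then pa i else 1 - pa i) := by
      intro i; split <;> ring
    rw [Finset.prod_congr rfl (fun i _ => h1 i), Finset.prod_congr rfl (fun i _ => h2 i)]
    ring
end

section
/- For arbitrarily correlated pairs of classifiers, Δ_{i,j} = f_{i,j,β} − f_{i,β}f_{j,β} = P_α(1−P_α)(P_{i,α}+P_{i,β}−1)(P_{j,α}+P_{j,β}−1) + P_α·Γ_{i,j,α} + (1−P_α)·Γ_{i,j,β}; consequently if P_{i,α}+P_{i,β} = 1 and P_α·Γ_{i,j,α} + (1−P_α)·Γ_{i,j,β} = 0 then Δ_{i,j} = 0 even when the correlations are nonzero. -/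
/-- For arbitrarily correlated pairs,
Δ_{i,j} = P_α(1−P_α)(P_{i,α}+P_{i,β}−1)(P_{j,α}+P_{j,β}−1) + P_α Γ_{i,j,α} + (1−P_α) Γ_{i,j,β};
consequently if P_{i,α}+P_{i,β} = 1 and P_α Γ_{i,j,α} + (1−P_α) Γ_{i,j,β} = 0 then Δ_{i,j} = 0
even when the correlations are nonzero. -/
theorem correlated_delta_identity (pα pia pib pja pjb Γa Γb : ℝ) :
    ((pα * ((1 - pia) * (1 - pja) + Γa) + (1 - pα) * (pib * pjb + Γb)) -
        (pα * (1 - pia) + (1 - pα) * pib) * (pα * (1 - pja) + (1 - pα) * pjb) =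
      pα * (1 - pα) * (pia + pib - 1) * (pja + pjb - 1) + pα * Γa + (1 - pα) * Γb) ∧
    (pia + pib = 1 → pα * Γa + (1 - pα) * Γb = 0 →
      (pα * ((1 - pia) * (1 - pja) + Γa) + (1 - pα) * (pib * pjb + Γb)) -
          (pα * (1 - pia) + (1 - pα) * pib) * (pα * (1 - pja) + (1 - pα) * pjb) = 0) := by
  constructor
  · ring
  · intro h1 h2
    have h3 : pib = 1 - pia := by linarith
    subst h3
    linear_combination h2
end
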